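/- Let P be a finite poset and C a connected finite poset of height one such that there exists a surjective order-preserving map f : P → C. Define 𝒞_imp(P) as the set of improper 4-crowns contained in E(P), ℳ(P) as the union of their inners, Ξ(m) = (L(P) ∩ ↓m) ∪ (U(P) ∩ ↑m) for m ∈ ℳ(P), and ℱ(P) as the maximal such sets Ξ(m) under inclusion (the 4-crown bundles). Then there exists an order-preserving map g : P → C with g[L(P)] = L(C) and g[U(P)] = U(C) such that for every 4-crown bundle F ∈ ℱ(P), the image g[F] does not contain two distinct points of L(C) and two distinct points of U(C) simultaneously. -/

import Mathlib

open Set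

/-- Minimal points of a poset. -/
def LSet (α : Type*) [PartialOrder α] : Set α := {x | ∀ y, y ≤ x → y = x}

/-- Maximal points of a poset. -/
def USet (α : Type*) [PartialOrder α] : Set α := {x | ∀ y, x ≤ y → y = x}

/-- Extremal points. -/
def ESet (α : Type*) [PartialOrder α] : Set α := LSet α ∪ USet α

/-- Non-extremal (interior) points. -/
def MSet (α : Type*) [PartialOrder α] : Set α := (ESet α)ᶜ

/-- No isolated points: every point is comparable to some other point. -/
def NoIsolated (α : Type*) [PartialOrder α] : Prop := ∀ x : α, ∃ y : α, x < y ∨ y < x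

/-- Height one: every point is extremal and some strict comparability exists. -/
def HeightOne (α : Type*) [PartialOrder α] : Prop :=
  (∀ x : α, x ∈ ESet α) ∧ ∃ x y : α, x < y

/-- A 4-crown with minimal points a, b and maximal points v, w:
the comparabilities are exactly a<v, a<w, b<v, b<w. -/
def IsCrown {α : Type*} [PartialOrder α] (a b v w : α) : Prop :=
  a < v ∧ a < w ∧ b < v ∧ b < w ∧ ¬ a ≤ b ∧ ¬ b ≤ a ∧ ¬ v ≤ w ∧ ¬ w ≤ v

/-- The inner of a 4-crown: [a,v] ∩ [b,w]. -/
def crownInner {α : Type*} [PartialOrder α] (a b v w : α) : Set α :=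
  {m | a ≤ m ∧ m ≤ v} ∩ {m | b ≤ m ∧ m ≤ w}

/-- An improper 4-crown contained in the extremal points E(P). -/
def IsImproperCrownE {α : Type*} [PartialOrder α] (a b v w : α) : Prop :=
  IsCrown a b v w ∧ a ∈ ESet α ∧ b ∈ ESet α ∧ v ∈ ESet α ∧ w ∈ ESet α ∧
    (crownInner a b v w).Nonempty

/-- Inner points of improper 4-crowns contained in E(P). -/
def innerPts (α : Type*) [PartialOrder α] : Set α :=
  {m | ∃ a b v w : α, IsImproperCrownE a b v w ∧ m ∈ crownInner a b v w}

/-- Ξ(m): union of all improper 4-crowns with inner point m. -/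
def Xi {α : Type*} [PartialOrder α] (m : α) : Set α :=
  (LSet α ∩ {x | x ≤ m}) ∪ (USet α ∩ {x | m ≤ x})

/-- 4-crown bundles: maximal sets Ξ(m) with respect to inclusion. -/
def bundles (α : Type*) [PartialOrder α] : Set (Set α) :=
  {F | ∃ m ∈ innerPts α, F = Xi m ∧
    ∀ m' ∈ innerPts α, Xi m ⊆ Xi m' → Xi m' = Xi m}

/-- R is a retract of the poset on α. -/
def IsRetract (α : Type*) [PartialOrder α] (R : Set α) : Prop :=
  ∃ r : α → α, Monotone r ∧ (∀ x, r (r x) = r x) ∧ Set.range r = R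

/-- C is a retract of the induced subposet on Y. -/
def IsRetractIn {α : Type*} [PartialOrder α] (Y C : Set α) : Prop :=
  ∃ r : Y → Y, Monotone r ∧ (∀ x, r (r x) = r x) ∧
    Set.range r = {y : Y | (y : α) ∈ C}

/-- The comparability graph of the poset is connected. -/
def PosetConnected (α : Type*) [PartialOrder α] : Prop :=
  ∀ x y : α, Relation.ReflTransGen (fun u v => u ≤ v ∨ v ≤ u) x y

/-- Minimal points of an induced subposet. -/
def minIn {α : Type*} [PartialOrder α] (S : Set α) : Set α :=
  {x ∈ S | ∀ y ∈ S, y ≤ x → y = x}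

/-- Maximal points of an induced subposet. -/
def maxIn {α : Type*} [PartialOrder α] (S : Set α) : Set α :=
  {x ∈ S | ∀ y ∈ S, x ≤ y → y = x}

theorem stmt9 {α β : Type*} [Fintype α] [PartialOrder α] [Fintype β] [PartialOrder β]
    [Nontrivial α] (hiso : NoIsolated α)
    (hconn : PosetConnected β) (hht : HeightOne β)
    (f : α → β) (hf : Monotone f) (hsurj : Function.Surjective f) :
    ∃ g : α → β, Monotone g ∧ g '' LSet α = LSet β ∧ g '' USet α = USet β ∧
      ∀ F ∈ bundles α,
        ¬ ((∃ a ∈ g '' F ∩ LSet β, ∃ b ∈ g '' F ∩ LSet β, a ≠ b) ∧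
           (∃ v ∈ g '' F ∩ USet β, ∃ w ∈ g '' F ∩ USet β, v ≠ w)) := by
  classical
  -- minimal below / maximal above, in any finite poset
  have hminA : ∀ x : α, ∃ l, l ≤ x ∧ l ∈ LSet α := by
    intro x
    obtain ⟨b, hbx, hb⟩ := Finite.exists_le_minimal (p := fun _ : α => True) trivial
    exact ⟨b, hbx, fun y hy => le_antisymm hy (hb.2 trivial hy)⟩
  have hminB : ∀ b : β, ∃ l, l ≤ b ∧ l ∈ LSet β := by
    intro x
    obtain ⟨b, hbx, hb⟩ := Finite.exists_le_minimal (p := fun _ : β => True) trivial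
    exact ⟨b, hbx, fun y hy => le_antisymm hy (hb.2 trivial hy)⟩
  have hmaxA : ∀ x : α, ∃ u, x ≤ u ∧ u ∈ USet α := by
    intro x
    obtain ⟨b, hbx, hb⟩ := Finite.exists_le_maximal (p := fun _ : α => True) trivial
    exact ⟨b, hbx, fun y hy => le_antisymm (hb.2 trivial hy) hy⟩
  have hmaxB : ∀ b : β, ∃ u, b ≤ u ∧ u ∈ USet β := by
    intro x
    obtain ⟨b, hbx, hb⟩ := Finite.exists_le_maximal (p := fun _ : β => True) trivial
    exact ⟨b, hbx, fun y hy => le_antisymm (hb.2 trivial hy) hy⟩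
  choose dn hdnle hdnL using hminB
  choose up hupge hupU using hmaxB
  -- in α there is no point both minimal and maximal
  have hLU : ∀ x : α, x ∈ LSet α → x ∉ USet α := by
    intro x hL hU
    obtain ⟨y, hy⟩ := hiso x
    rcases hy with h | h
    · exact h.ne (hU y h.le).symm
    · exact h.ne (hL y h.le)
  -- in β no point is both minimal and maximal
  have hLUβ : ∀ b : β, b ∈ LSet β → b ∉ USet β := by
    intro b hL hU
    obtain ⟨x, y, hxy⟩ := hht.2
    have key : ∀ z : β, Relation.ReflTransGen (fun u v => u ≤ v ∨ v ≤ u) b z → z = b := by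
      intro z hz
      induction hz with
      | refl => rfl
      | tail _ h ih =>
        subst ih
        rcases h with h | h
        · exact hU _ h
        · exact hL _ h
    have hx := key x (hconn b x)
    have hy := key y (hconn b y)
    rw [hx, hy] at hxy
    exact lt_irrefl b hxy
  -- the map g
  set g : α → β := fun x =>
    if x ∈ LSet α then dn (f x) else if x ∈ USet α then up (f x) else f x with hg
  have hgL : ∀ x ∈ LSet α, g x = dn (f x) := by
    intro x hx; simp [hg, hx]
  have hgU : ∀ x ∈ USet α, g x = up (f x) := by
    intro x hx
    have hnl : x ∉ LSet α := fun h => hLU x h hx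
    simp [hg, hnl, hx]
  have hgM : ∀ x : α, x ∉ LSet α → x ∉ USet α → g x = f x := by
    intro x h1 h2; simp [hg, h1, h2]
  -- g x is always between dn/up variations: key inequalities
  have hgle : ∀ x : α, g x ≤ f x ∨ f x ≤ g x := by
    intro x
    by_cases h1 : x ∈ LSet α
    · left; rw [hgL x h1]; exact hdnle _
    by_cases h2 : x ∈ USet α
    · right; rw [hgU x h2]; exact hupge _
    · left; rw [hgM x h1 h2]
  have hmono : Monotone g := by
    intro x y hxy
    rcases eq_or_lt_of_le hxy with rfl | hlt
    · exact le_rfl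
    have hyL : y ∉ LSet α := fun hy => hlt.ne (hy x hxy)
    have hxU : x ∉ USet α := fun hx => hlt.ne' (hx y hxy)
    have h1 : g x ≤ f x := by
      by_cases h : x ∈ LSet α
      · rw [hgL x h]; exact hdnle _
      · rw [hgM x h hxU]
    have h2 : f y ≤ g y := by
      by_cases h : y ∈ USet α
      · rw [hgU y h]; exact hupge _
      · rw [hgM y hyL h]
    exact h1.trans ((hf hxy).trans h2)
  refine ⟨g, hmono, ?_, ?_, ?_⟩
  · -- g '' LSet α = LSet β
    apply Set.Subset.antisymm
    · rintro _ ⟨x, hx, rfl⟩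
      rw [hgL x hx]; exact hdnL _
    · intro c hc
      obtain ⟨x, hx⟩ := hsurj c
      obtain ⟨l, hlx, hl⟩ := hminA x
      refine ⟨l, hl, ?_⟩
      rw [hgL l hl]
      exact hc _ ((hdnle _).trans ((hf hlx).trans_eq hx))
  · -- g '' USet α = USet β
    apply Set.Subset.antisymm
    · rintro _ ⟨x, hx, rfl⟩
      rw [hgU x hx]; exact hupU _
    · intro c hc
      obtain ⟨x, hx⟩ := hsurj c
      obtain ⟨u, hxu, hu⟩ := hmaxA x
      refine ⟨u, hu, ?_⟩
      rw [hgU u hu]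
      exact hc _ (((hx ▸ hf hxu : c ≤ f u)).trans (hupge _))
  · -- bundle condition
    rintro F ⟨m, hm, rfl, -⟩
    rintro ⟨⟨p, ⟨⟨xp, hxp, hgxp⟩, hpL⟩, q, ⟨⟨xq, hxq, hgxq⟩, hqL⟩, hpq⟩,
           ⟨v, ⟨⟨xv, hxv, hgxv⟩, hvU⟩, w, ⟨⟨xw, hxw, hgxw⟩, hwU⟩, hvw⟩⟩
    have keyL : (f m ∈ LSet β) → ∀ c ∈ LSet β, ∀ x ∈ Xi m, g x = c → c = f m := by
      intro hfm c hc x hx hgx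
      rcases hx with ⟨hxL, hxm⟩ | ⟨hxU, hmx⟩
      · have : g x ≤ f m := by
          rw [hgL x hxL]; exact (hdnle _).trans (hf hxm)
        exact hfm _ (hgx ▸ this)
      · exfalso
        have : g x ∈ USet β := by rw [hgU x hxU]; exact hupU _
        exact hLUβ c hc (hgx ▸ this)
    have keyU : (f m ∈ USet β) → ∀ c ∈ USet β, ∀ x ∈ Xi m, g x = c → c = f m := by
      intro hfm c hc x hx hgx
      rcases hx with ⟨hxL, hxm⟩ | ⟨hxU, hmx⟩
      · exfalso
        have : g x ∈ LSet β := by rw [hgL x hxL]; exact hdnL _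
        exact hLUβ (g x) this (hgx ▸ hc)
      · have : f m ≤ g x := by
          rw [hgU x hxU]; exact (hf hmx).trans (hupge _)
        exact hfm _ (hgx ▸ this)
    rcases hht.1 (f m) with hfm | hfm
    · exact hpq ((keyL hfm p hpL xp hxp hgxp).trans (keyL hfm q hqL xq hxq hgxq).symm)
    · exact hvw ((keyU hfm v hvU xv hxv hgxv).trans (keyU hfm w hwU xw hxw hgxw).symm)
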